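/- For every positive integer N, there exists a pair of {0,1}-valued random variables (Ŷ, Y) on a finite probability space whose joint distribution assigns probability 1/(N+3) to each of the outcomes (Ŷ, Y) = (0,0) [true negative], (Ŷ, Y) = (1,0) [false positive], and (Ŷ, Y) = (1,1) [true positive], and probability N/(N+3) to (Ŷ, Y) = (0,1) [false negative], such that PPV = 1/2 and γ = TPR·PPV + FNR·FOR ≥ (N/(N+1))². -/

import Mathlib

open MeasureTheory ENNReal

/-- Conditional probability `Pr[s | t]` as a real number. -/
noncomputable def condProb {Ω : Type*} [MeasurableSpace Ω] (μ : Measure Ω) (s t : Set Ω) : ℝ :=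
  (μ (s ∩ t)).toReal / (μ t).toReal

/-- For every positive integer `N` there is a pair of `{0,1}`-valued random variables
`(Ŷ, Y)` on a finite probability space with one true negative, one false positive, one
true positive and `N` false negatives (i.e. probabilities `1/(N+3)`, `1/(N+3)`,
`1/(N+3)` and `N/(N+3)` respectively), such that `PPV = 1/2` while
`γ = TPR·PPV + FNR·FOR ≥ (N/(N+1))²`. -/
theorem stmt_13 (N : ℕ) (hN : 0 < N) :
    ∃ (Ω : Type) (_ : Fintype Ω) (_ : MeasurableSpace Ω) (μ : Measure Ω)
      (_ : IsProbabilityMeasure μ) (Yh Y : Ω → Fin 2),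
      Measurable Yh ∧ Measurable Y ∧
      -- true negative
      μ {ω | Yh ω = 0 ∧ Y ω = 0} = 1 / ((N : ℝ≥0∞) + 3) ∧
      -- false positive
      μ {ω | Yh ω = 1 ∧ Y ω = 0} = 1 / ((N : ℝ≥0∞) + 3) ∧
      -- true positive
      μ {ω | Yh ω = 1 ∧ Y ω = 1} = 1 / ((N : ℝ≥0∞) + 3) ∧
      -- false negatives
      μ {ω | Yh ω = 0 ∧ Y ω = 1} = (N : ℝ≥0∞) / ((N : ℝ≥0∞) + 3) ∧
      -- PPV = 1/2
      condProb μ {ω | Y ω = 1} {ω | Yh ω = 1} = 1 / 2 ∧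
      -- γ = TPR·PPV + FNR·FOR ≥ (N/(N+1))²
      condProb μ {ω | Yh ω = 1} {ω | Y ω = 1} * condProb μ {ω | Y ω = 1} {ω | Yh ω = 1}
        + condProb μ {ω | Yh ω = 0} {ω | Y ω = 1} * condProb μ {ω | Y ω = 1} {ω | Yh ω = 0}
        ≥ ((N : ℝ) / ((N : ℝ) + 1)) ^ 2 := by
  classical
  have hden : ((N : ℝ≥0∞) + 3) ≠ 0 := by simp
  have hdentop : ((N : ℝ≥0∞) + 3) ≠ ⊤ := by simp [ENNReal.add_eq_top]
  set c : ℝ≥0∞ := ((N : ℝ≥0∞) + 3)⁻¹ with hcdef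
  have hctop : c ≠ ⊤ := by simp [hcdef, hden]
  letI m : MeasurableSpace (Fin 2 × Fin 2) := ⊤
  set μ : Measure (Fin 2 × Fin 2) :=
    c • Measure.dirac (0, 0) + c • Measure.dirac (1, 0) + c • Measure.dirac (1, 1)
      + ((N : ℝ≥0∞) * c) • Measure.dirac (0, 1) with hμ
  have key : ∀ s : Set (Fin 2 × Fin 2), μ s =
      s.indicator (fun _ => c) (0, 0) + s.indicator (fun _ => c) (1, 0)
        + s.indicator (fun _ => c) (1, 1) + s.indicator (fun _ => (N : ℝ≥0∞) * c) (0, 1) := by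
    intro s
    have hs : MeasurableSet s := trivial
    simp [hμ, Measure.dirac_apply' _ hs, Set.indicator, mul_ite]
  have hprob : IsProbabilityMeasure μ := by
    constructor
    rw [key]
    simp only [Set.indicator_univ]
    have : c + c + c + (N : ℝ≥0∞) * c = ((N : ℝ≥0∞) + 3) * c := by ring
    rw [this, hcdef, ENNReal.mul_inv_cancel hden hdentop]
  -- measures of the four atoms and the marginal sets
  have hTN : μ {ω : Fin 2 × Fin 2 | ω.1 = 0 ∧ ω.2 = 0} = c := by
    rw [key]; norm_num [Set.indicator]
  have hFP : μ {ω : Fin 2 × Fin 2 | ω.1 = 1 ∧ ω.2 = 0} = c := by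
    rw [key]; norm_num [Set.indicator]
  have hTP : μ {ω : Fin 2 × Fin 2 | ω.1 = 1 ∧ ω.2 = 1} = c := by
    rw [key]; norm_num [Set.indicator]
  have hFN : μ {ω : Fin 2 × Fin 2 | ω.1 = 0 ∧ ω.2 = 1} = (N : ℝ≥0∞) * c := by
    rw [key]; norm_num [Set.indicator]
  have hY1cYh1 : μ ({ω : Fin 2 × Fin 2 | ω.2 = 1} ∩ {ω | ω.1 = 1}) = c := by
    rw [key]; norm_num [Set.indicator]
  have hYh1 : μ {ω : Fin 2 × Fin 2 | ω.1 = 1} = c + c := by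
    rw [key]; norm_num [Set.indicator]
  have hYh1cY1 : μ ({ω : Fin 2 × Fin 2 | ω.1 = 1} ∩ {ω | ω.2 = 1}) = c := by
    rw [key]; norm_num [Set.indicator]
  have hY1 : μ {ω : Fin 2 × Fin 2 | ω.2 = 1} = c + (N : ℝ≥0∞) * c := by
    rw [key]; norm_num [Set.indicator]
  have hYh0cY1 : μ ({ω : Fin 2 × Fin 2 | ω.1 = 0} ∩ {ω | ω.2 = 1}) = (N : ℝ≥0∞) * c := by
    rw [key]; norm_num [Set.indicator]
  have hY1cYh0 : μ ({ω : Fin 2 × Fin 2 | ω.2 = 1} ∩ {ω | ω.1 = 0}) = (N : ℝ≥0∞) * c := by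
    rw [key]; norm_num [Set.indicator]
  have hYh0 : μ {ω : Fin 2 × Fin 2 | ω.1 = 0} = c + (N : ℝ≥0∞) * c := by
    rw [key]; norm_num [Set.indicator]
  -- real-valued computations
  have hrpos : (0 : ℝ) < (N : ℝ) + 3 := by positivity
  have hctr : c.toReal = ((N : ℝ) + 3)⁻¹ := by
    rw [hcdef, ENNReal.toReal_inv]
    norm_num [ENNReal.toReal_add (show (N:ℝ≥0∞) ≠ ⊤ by simp) (show (3:ℝ≥0∞) ≠ ⊤ by simp)]
  have hNc : ((N : ℝ≥0∞) * c).toReal = (N : ℝ) * ((N : ℝ) + 3)⁻¹ := by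
    rw [ENNReal.toReal_mul, hctr]; simp
  have hsum : (c + c).toReal = 2 * ((N : ℝ) + 3)⁻¹ := by
    rw [ENNReal.toReal_add hctop hctop, hctr]; ring
  have hsum2 : (c + (N : ℝ≥0∞) * c).toReal = (1 + (N : ℝ)) * ((N : ℝ) + 3)⁻¹ := by
    rw [ENNReal.toReal_add hctop (by finiteness), hctr, hNc]; ring
  have hN1 : (0 : ℝ) < (N : ℝ) + 1 := by positivity
  refine ⟨Fin 2 × Fin 2, inferInstance, m, μ, hprob, Prod.fst, Prod.snd,
    measurable_from_top, measurable_from_top, ?_, ?_, ?_, ?_, ?_, ?_⟩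
  · rw [one_div]; exact hTN
  · rw [one_div]; exact hFP
  · rw [one_div]; exact hTP
  · rw [ENNReal.div_eq_inv_mul, mul_comm]; exact hFN
  · show (μ _).toReal / (μ _).toReal = 1 / 2
    rw [hY1cYh1, hYh1, hctr, hsum]
    field_simp
  · show (μ _).toReal / (μ _).toReal * ((μ _).toReal / (μ _).toReal)
      + (μ _).toReal / (μ _).toReal * ((μ _).toReal / (μ _).toReal) ≥ _
    rw [hYh1cY1, hY1, hY1cYh1, hYh1, hYh0cY1, hY1cYh0, hYh0, hctr, hNc, hsum, hsum2]
    have h1 : ((N : ℝ) + 3)⁻¹ / ((1 + (N : ℝ)) * ((N : ℝ) + 3)⁻¹) = 1 / ((N : ℝ) + 1) := by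
      field_simp; ring
    have h2 : (N : ℝ) * ((N : ℝ) + 3)⁻¹ / ((1 + (N : ℝ)) * ((N : ℝ) + 3)⁻¹)
        = (N : ℝ) / ((N : ℝ) + 1) := by
      field_simp
      ring
    have h3 : ((N : ℝ) + 3)⁻¹ / (2 * ((N : ℝ) + 3)⁻¹) = 1 / 2 := by
      field_simp
    rw [h1, h2, h3]
    have : (0 : ℝ) ≤ 1 / ((N : ℝ) + 1) * (1 / 2) := by positivity
    nlinarith [sq_nonneg ((N : ℝ) / ((N : ℝ) + 1))]
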